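/- The scale-function integral toward 0 in Feller's test for explosion diverges: ∫_0^ℓ exp( 2 Ψ(r) ) dr = ∞, where Ψ(r) := ∫_r^ℓ (y^α − μ y − h(y)) / (σ² y²) dy for 0 < r ≤ ℓ. -/

import Mathlib

open Set Filter Topology MeasureTheory

/-- Feller's test toward `0`: the scale-function integral
`∫_0^ℓ exp(2Ψ(r)) dr` diverges, where
`Ψ(r) = ∫_r^ℓ (y^α − μy − h(y))/(σ²y²) dy` and `h(y)/y^α → 0` as `y ↓ 0`. -/
theorem feller_test_integral_at_zero_diverges
    (α μ σ ℓ : ℝ) (hα0 : 0 < α) (hα1 : α < 1) (hμ : 0 < μ) (hσ : 0 < σ) (hℓ : 0 < ℓ)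
    (h : ℝ → ℝ) (hcont : ContinuousOn h (Ioi 0)) (hnonneg : ∀ y > (0 : ℝ), 0 ≤ h y)
    (hzero : Tendsto (fun y => h y / y ^ α) (𝓝[>] 0) (𝓝 0))
    (Ψ : ℝ → ℝ)
    (hΨ : ∀ r : ℝ, 0 < r → r ≤ ℓ →
      Ψ r = ∫ y in r..ℓ, (y ^ α - μ * y - h y) / (σ ^ 2 * y ^ 2)) :
    ∫⁻ r in Ioo 0 ℓ, ENNReal.ofReal (Real.exp (2 * Ψ r)) = ⊤ := by
  have hσ2 : (0:ℝ) < σ ^ 2 := by positivity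
  have h1α : (0:ℝ) < 1 - α := by linarith
  set F : ℝ → ℝ := fun y => (y ^ α - μ * y - h y) / (σ ^ 2 * y ^ 2) with hF
  set c : ℝ := 1 / (4 * σ ^ 2 * (1 - α)) with hc
  have hcpos : 0 < c := by rw [hc]; positivity
  -- Step 1: find δ such that on (0, δ], the numerator is ≥ (1/4) y^α.
  have h1 : ∀ᶠ y in 𝓝[>] (0:ℝ), h y ≤ 1/2 * y ^ α := by
    filter_upwards [hzero.eventually_lt_const (show (0:ℝ) < 1/2 by norm_num),
      self_mem_nhdsWithin] with y hy hy0
    have hyα : (0:ℝ) < y ^ α := Real.rpow_pos_of_pos hy0 α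
    rw [div_lt_iff₀ hyα] at hy
    linarith
  have h2 : ∀ᶠ y in 𝓝[>] (0:ℝ), μ * y ≤ 1/4 * y ^ α := by
    have hT : Tendsto (fun y : ℝ => μ * y ^ (1 - α)) (𝓝[>] 0) (𝓝 0) := by
      have : Tendsto (fun y : ℝ => y ^ (1 - α)) (𝓝 0) (𝓝 ((0:ℝ) ^ (1 - α))) :=
        (Real.continuousAt_rpow_const 0 (1 - α) (Or.inr h1α.le))
      rw [Real.zero_rpow (ne_of_gt h1α)] at this
      simpa using (this.const_mul μ).mono_left nhdsWithin_le_nhds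
    filter_upwards [hT.eventually_lt_const (show (0:ℝ) < 1/4 by norm_num),
      self_mem_nhdsWithin] with y hy hy0
    have hyy : y = y ^ (1 - α) * y ^ α := by
      rw [← Real.rpow_add hy0]; norm_num
    have hyα : (0:ℝ) < y ^ α := Real.rpow_pos_of_pos hy0 α
    have h3 : μ * y = μ * y ^ (1 - α) * y ^ α := by
      conv_lhs => rw [hyy]
      ring
    rw [h3]
    nlinarith
  obtain ⟨δ₁, hδ₁, hδ₁sub⟩ := mem_nhdsGT_iff_exists_Ioo_subset.1 (h1.and h2)
  set δ : ℝ := min (δ₁ / 2) ℓ with hδdef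
  have hδ0 : 0 < δ := lt_min (by simpa using half_pos (mem_Ioi.1 hδ₁)) hℓ
  have hδℓ : δ ≤ ℓ := min_le_right _ _
  have hδmem : ∀ y ∈ Ioc (0:ℝ) δ, h y ≤ 1/2 * y ^ α ∧ μ * y ≤ 1/4 * y ^ α := by
    intro y hy
    exact hδ₁sub ⟨hy.1, lt_of_le_of_lt (hy.2.trans (min_le_left _ _)) (half_lt_self hδ₁)⟩
  -- Lower bound for the integrand on (0, δ]
  have hf_lb : ∀ y ∈ Ioc (0:ℝ) δ, 1 / (4 * σ ^ 2) * y ^ (α - 2) ≤ F y := by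
    intro y hy
    obtain ⟨hh, hm⟩ := hδmem y hy
    have hy0 : 0 < y := hy.1
    have hden : (0:ℝ) < σ ^ 2 * y ^ 2 := by positivity
    have hnum : 1/4 * y ^ α ≤ y ^ α - μ * y - h y := by linarith
    have key : 1 / (4 * σ ^ 2) * y ^ (α - 2) = (1/4 * y ^ α) / (σ ^ 2 * y ^ 2) := by
      have h2' : y ^ (α - 2) = y ^ α / y ^ 2 := by
        rw [Real.rpow_sub hy0, Real.rpow_two]
      rw [h2']
      field_simp
    rw [key, hF]
    exact div_le_div_of_nonneg_right hnum hden.le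
  -- continuity / integrability of F on compact subintervals of (0, ∞)
  have hFcont : ContinuousOn F (Ioi 0) := by
    apply ContinuousOn.div
    · apply ContinuousOn.sub
      apply ContinuousOn.sub
      · exact continuousOn_id.rpow_const fun x hx => Or.inl (ne_of_gt hx)
      · exact (continuous_const.mul continuous_id).continuousOn
      · exact hcont
    · exact (continuous_const.mul (continuous_pow 2)).continuousOn
    · intro x hx
      have : (0:ℝ) < x := hx
      positivity
  have hFint : ∀ a b : ℝ, 0 < a → 0 < b → IntervalIntegrable F volume a b := by
    intro a b ha hb
    apply (hFcont.mono ?_).intervalIntegrable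
    intro x hx
    rw [Set.uIcc] at hx
    exact lt_of_lt_of_le (lt_min ha hb) hx.1
  -- Main lower bound for Ψ on (0, δ)
  have hmain : ∀ r ∈ Ioo (0:ℝ) δ, c * r ^ (α - 1) + (Ψ δ - c * δ ^ (α - 1)) ≤ Ψ r := by
    intro r hr
    have hr0 : 0 < r := hr.1
    have hrδ : r ≤ δ := hr.2.le
    rw [hΨ r hr0 (hrδ.trans hδℓ), hΨ δ hδ0 hδℓ]
    have hsplit : (∫ y in r..δ, F y) + (∫ y in δ..ℓ, F y) = ∫ y in r..ℓ, F y :=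
      intervalIntegral.integral_add_adjacent_intervals (hFint r δ hr0 hδ0) (hFint δ ℓ hδ0 hℓ)
    have hGint : IntervalIntegrable (fun y : ℝ => 1 / (4 * σ ^ 2) * y ^ (α - 2)) volume r δ := by
      apply ContinuousOn.intervalIntegrable
      apply ContinuousOn.mul continuousOn_const
      apply ContinuousOn.rpow_const
      · exact continuousOn_id
      · intro x hx
        rw [Set.uIcc] at hx
        exact Or.inl (ne_of_gt (lt_of_lt_of_le (lt_min hr0 hδ0) hx.1))
    have hmono : (∫ y in r..δ, 1 / (4 * σ ^ 2) * y ^ (α - 2)) ≤ ∫ y in r..δ, F y := by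
      apply intervalIntegral.integral_mono_on hrδ hGint (hFint r δ hr0 hδ0)
      intro y hy
      exact hf_lb y ⟨lt_of_lt_of_le hr0 hy.1, hy.2⟩
    have hcomp : (∫ y in r..δ, 1 / (4 * σ ^ 2) * y ^ (α - 2))
        = c * (r ^ (α - 1) - δ ^ (α - 1)) := by
      rw [intervalIntegral.integral_const_mul]
      rw [integral_rpow (Or.inr ⟨by intro hcon; linarith [hcon], by
        rw [Set.uIcc]
        intro hx
        exact absurd hx.1 (not_le.2 (lt_min hr0 hδ0))⟩)]
      have heq : α - 2 + 1 = α - 1 := by ring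
      rw [heq, hc]
      have h4 : (4:ℝ) * σ ^ 2 * (1 - α) ≠ 0 := by positivity
      have h5 : α - 1 ≠ 0 := sub_ne_zero.2 (ne_of_lt hα1)
      field_simp
      ring
    have := hcomp ▸ hmono
    linarith [hsplit, this]
  -- Step 2: the lower bound forces exp(2Ψ r) ≥ 1/r near 0.
  set C : ℝ := 2 * Ψ δ - 2 * c * δ ^ (α - 1) with hC
  have hT : Tendsto (fun r : ℝ => 2 * c * r ^ (α - 1) + C + Real.log r) (𝓝[>] 0) atTop := by
    have hfactor : Tendsto (fun r : ℝ => r ^ (α - 1) * (2 * c + (C + Real.log r) * r ^ (1 - α)))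
        (𝓝[>] 0) atTop := by
      have h1' : Tendsto (fun r : ℝ => r ^ (α - 1)) (𝓝[>] (0:ℝ)) atTop := by
        have hinv : Tendsto (fun r : ℝ => r⁻¹) (𝓝[>] (0:ℝ)) atTop := tendsto_inv_nhdsGT_zero
        have hp : Tendsto (fun x : ℝ => x ^ (1 - α)) atTop atTop := tendsto_rpow_atTop h1α
        have := hp.comp hinv
        apply this.congr'
        filter_upwards [self_mem_nhdsWithin] with r hr
        have hr0 : (0:ℝ) < r := hr
        have : r⁻¹ ^ (1 - α) = r ^ (α - 1) := by
          rw [← Real.rpow_neg_one r, ← Real.rpow_mul hr0.le]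
          congr 1
          ring
        simpa [Function.comp] using this
      have h2' : Tendsto (fun r : ℝ => 2 * c + (C + Real.log r) * r ^ (1 - α))
          (𝓝[>] (0:ℝ)) (𝓝 (2 * c)) := by
        have hlog : Tendsto (fun r : ℝ => Real.log r * r ^ (1 - α)) (𝓝[>] (0:ℝ)) (𝓝 0) :=
          tendsto_log_mul_rpow_nhdsGT_zero h1α
        have hCr : Tendsto (fun r : ℝ => C * r ^ (1 - α)) (𝓝[>] (0:ℝ)) (𝓝 0) := by
          have : Tendsto (fun y : ℝ => y ^ (1 - α)) (𝓝 0) (𝓝 ((0:ℝ) ^ (1 - α))) :=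
            (Real.continuousAt_rpow_const 0 (1 - α) (Or.inr h1α.le))
          rw [Real.zero_rpow (ne_of_gt h1α)] at this
          simpa using (this.const_mul C).mono_left nhdsWithin_le_nhds
        have := hCr.add hlog
        simp only [add_zero] at this
        have h' : Tendsto (fun r : ℝ => 2 * c + (C * r ^ (1 - α) + Real.log r * r ^ (1 - α)))
            (𝓝[>] (0:ℝ)) (𝓝 (2 * c + 0)) := tendsto_const_nhds.add this
        rw [add_zero] at h'
        apply h'.congr
        intro r
        ring
      exact h1'.atTop_mul_pos (by positivity) h2'
    apply hfactor.congr'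
    filter_upwards [self_mem_nhdsWithin] with r hr
    have hr0 : (0:ℝ) < r := hr
    have hprod : r ^ (α - 1) * r ^ (1 - α) = 1 := by
      rw [← Real.rpow_add hr0]; norm_num
    calc r ^ (α - 1) * (2 * c + (C + Real.log r) * r ^ (1 - α))
        = 2 * c * r ^ (α - 1) + (C + Real.log r) * (r ^ (α - 1) * r ^ (1 - α)) := by ring
      _ = 2 * c * r ^ (α - 1) + C + Real.log r := by rw [hprod]; ring
  obtain ⟨δ₂, hδ₂, hδ₂sub⟩ := mem_nhdsGT_iff_exists_Ioo_subset.1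
    (hT.eventually (eventually_ge_atTop (0:ℝ)))
  set δ' : ℝ := min δ₂ δ with hδ'def
  have hδ'0 : 0 < δ' := lt_min hδ₂ hδ0
  have hlb : ∀ r ∈ Ioo (0:ℝ) δ', r⁻¹ ≤ Real.exp (2 * Ψ r) := by
    intro r hr
    have hr0 : 0 < r := hr.1
    have hrδ : r < δ := lt_of_lt_of_le hr.2 (min_le_right _ _)
    have hΨlb := hmain r ⟨hr0, hrδ⟩
    have hge : 0 ≤ 2 * c * r ^ (α - 1) + C + Real.log r :=
      hδ₂sub ⟨hr0, lt_of_lt_of_le hr.2 (min_le_left _ _)⟩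
    have hkey : -Real.log r ≤ 2 * Ψ r := by rw [hC] at hge; linarith
    calc r⁻¹ = Real.exp (-Real.log r) := by rw [Real.exp_neg, Real.exp_log hr0]
      _ ≤ Real.exp (2 * Ψ r) := Real.exp_le_exp.2 hkey
  have htop : ∫⁻ r in Ioo (0:ℝ) δ', ENNReal.ofReal r⁻¹ = ⊤ := by
    by_contra hne
    have hmeas : AEStronglyMeasurable (fun r : ℝ => r⁻¹)
        (volume.restrict (Ioo (0:ℝ) δ')) :=
      (measurable_inv : Measurable (fun r : ℝ => r⁻¹)).aestronglyMeasurable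
    have hae : 0 ≤ᵐ[volume.restrict (Ioo (0:ℝ) δ')] fun r : ℝ => r⁻¹ := by
      rw [EventuallyLE, ae_restrict_iff' measurableSet_Ioo]
      exact ae_of_all _ fun r hr => inv_nonneg.2 hr.1.le
    have hint : Integrable (fun r : ℝ => r⁻¹) (volume.restrict (Ioo (0:ℝ) δ')) :=
      (lintegral_ofReal_ne_top_iff_integrable hmeas hae).1 hne
    have hint' : IntegrableOn (fun r : ℝ => r ^ (-1 : ℝ)) (Ioo (0:ℝ) δ') := by
      have : (fun r : ℝ => r ^ (-1 : ℝ)) = fun r : ℝ => r⁻¹ := by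
        funext r; exact Real.rpow_neg_one r
      rw [this]; exact hint
    have := (intervalIntegral.integrableOn_Ioo_rpow_iff hδ'0).1 hint'
    linarith
  rw [← top_le_iff, ← htop]
  calc ∫⁻ r in Ioo (0:ℝ) δ', ENNReal.ofReal r⁻¹
      ≤ ∫⁻ r in Ioo (0:ℝ) δ', ENNReal.ofReal (Real.exp (2 * Ψ r)) := by
        apply setLIntegral_mono' measurableSet_Ioo
        intro r hr
        exact ENNReal.ofReal_le_ofReal (hlb r hr)
    _ ≤ ∫⁻ r in Ioo (0:ℝ) ℓ, ENNReal.ofReal (Real.exp (2 * Ψ r)) :=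
        lintegral_mono_set (Ioo_subset_Ioo_right ((min_le_right _ _).trans hδℓ))
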